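/- Let T be a triangle in the plane, E one of its edges, and p a polynomial (of any degree) on T. If p equals a constant a on E, the normal derivative of p vanishes on E, and p is harmonic on T, then p is identically equal to a on T. -/

import Mathlib

open scoped RealInnerProductSpace

namespace PhiFEMAux
open Polynomial MvPolynomial

/-! ### Coefficient-wise derivative on `ℝ[X][Y]` -/

noncomputable def dX (R : Polynomial (Polynomial ℝ)) : Polynomial (Polynomial ℝ) :=
  ⟨AddMonoidAlgebra.ofCoeff (Finsupp.mapRange (fun c => derivative c) (by simp) R.toFinsupp.coeff)⟩

lemma coeff_dX (R : Polynomial (Polynomial ℝ)) (k : ℕ) :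
    (dX R).coeff k = derivative (R.coeff k) := by
  simp [dX, Polynomial.coeff]

lemma dX_add (R S : Polynomial (Polynomial ℝ)) : dX (R + S) = dX R + dX S := by
  ext k; simp [coeff_dX]

lemma dX_C (c : Polynomial ℝ) : dX (Polynomial.C c) = Polynomial.C (derivative c) := by
  ext k; simp [coeff_dX, Polynomial.coeff_C, apply_ite (fun x => derivative x)]

lemma dX_monomial (k : ℕ) (c : Polynomial ℝ) :
    dX (Polynomial.monomial k c) = Polynomial.monomial k (derivative c) := by
  ext m; simp [coeff_dX, Polynomial.coeff_monomial, apply_ite (fun x => derivative x)]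

lemma dX_mul (R S : Polynomial (Polynomial ℝ)) : dX (R * S) = dX R * S + R * dX S := by
  refine Polynomial.ext fun k => ?_
  rw [coeff_dX, Polynomial.coeff_mul, Polynomial.coeff_add, Polynomial.coeff_mul, Polynomial.coeff_mul,
    map_sum]
  simp only [derivative_mul, ← coeff_dX]
  rw [Finset.sum_add_distrib]

/-! ### Evaluation of elements of `ℝ[X][Y]` as functions on `ℝ²` -/

noncomputable def ev (R : Polynomial (Polynomial ℝ)) (s t : ℝ) : ℝ :=
  (R.eval (Polynomial.C t)).eval s

lemma ev_add (R S : Polynomial (Polynomial ℝ)) (s t : ℝ) :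
    ev (R + S) s t = ev R s t + ev S s t := by simp [ev]

lemma ev_mul (R S : Polynomial (Polynomial ℝ)) (s t : ℝ) :
    ev (R * S) s t = ev R s t * ev S s t := by simp [ev]

lemma ev_eq_eval_map (R : Polynomial (Polynomial ℝ)) (s t : ℝ) :
    ev R s t = Polynomial.eval t (R.map (evalRingHom s)) := by
  induction R using Polynomial.induction_on' with
  | add f g hf hg => simp only [ev, Polynomial.eval_add, Polynomial.map_add] at *; rw [← hf, ← hg]
  | monomial k c => simp [ev, Polynomial.eval_monomial, Polynomial.map_monomial]

lemma hasDerivAt_ev_t (R : Polynomial (Polynomial ℝ)) (s t : ℝ) :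
    HasDerivAt (fun t => ev R s t) (ev (derivative R) s t) t := by
  simp only [ev_eq_eval_map]
  rw [← derivative_map]
  exact Polynomial.hasDerivAt _ t

lemma eval_C_dX (R : Polynomial (Polynomial ℝ)) (t : ℝ) :
    (dX R).eval (Polynomial.C t) = derivative (R.eval (Polynomial.C t)) := by
  induction R using Polynomial.induction_on' with
  | add f g hf hg => simp [dX_add, hf, hg]
  | monomial k c =>
    simp only [dX_monomial, Polynomial.eval_monomial, ← Polynomial.C_pow, derivative_mul, Polynomial.derivative_C,
      mul_zero, add_zero]

lemma hasDerivAt_ev_s (R : Polynomial (Polynomial ℝ)) (s t : ℝ) :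
    HasDerivAt (fun s => ev R s t) (ev (dX R) s t) s := by
  have h := Polynomial.hasDerivAt (R.eval (Polynomial.C t)) s
  simpa only [ev, eval_C_dX] using h

/-- A bivariate polynomial vanishing on an "infinite grid" is zero. -/
lemma eq_zero_of_ev_zero (R : Polynomial (Polynomial ℝ)) (S2 : Set ℝ) (hS2 : S2.Infinite)
    (h : ∀ t ∈ S2, ∃ S1 : Set ℝ, S1.Infinite ∧ ∀ s ∈ S1, ev R s t = 0) : R = 0 := by
  have key : ∀ t ∈ S2, R.eval (Polynomial.C t) = 0 := by
    intro t ht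
    obtain ⟨S1, hS1, hz⟩ := h t ht
    refine Polynomial.eq_zero_of_infinite_isRoot _ (hS1.mono ?_)
    intro s hs
    exact hz s hs
  refine Polynomial.eq_zero_of_infinite_isRoot _ (Set.Infinite.mono ?_
    (hS2.image (Polynomial.C_injective.injOn)))
  rintro x ⟨t, ht, rfl⟩
  exact key t ht

/-! ### Gradient of multivariate polynomial evaluation -/

noncomputable def grad (q : MvPolynomial (Fin 2) ℝ) (x : EuclideanSpace ℝ (Fin 2)) :
    EuclideanSpace ℝ (Fin 2) →L[ℝ] ℝ :=
  ∑ i : Fin 2, MvPolynomial.eval (fun j => x j) (pderiv i q) • (EuclideanSpace.proj i :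
     EuclideanSpace ℝ (Fin 2) →L[ℝ] ℝ)

lemma hasFDerivAt_eval (q : MvPolynomial (Fin 2) ℝ) (x : EuclideanSpace ℝ (Fin 2)) :
    HasFDerivAt (fun y : EuclideanSpace ℝ (Fin 2) => MvPolynomial.eval (fun i => y i) q)
      (grad q x) x := by
  induction q using MvPolynomial.induction_on generalizing x with
  | C r =>
    have : grad (MvPolynomial.C r) x = 0 := by simp [grad, pderiv_C]
    rw [this]
    simpa using hasFDerivAt_const r x
  | add f g hf hg =>
    have h : grad (f + g) x = grad f x + grad g x := by
      simp [grad, map_add, add_smul, Finset.sum_add_distrib]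
    rw [h]
    have := (hf x).add (hg x)
    simp only [map_add]; exact this
  | mul_X f j hf =>
    have hproj : HasFDerivAt (fun y : EuclideanSpace ℝ (Fin 2) => y j)
        (EuclideanSpace.proj (𝕜 := ℝ) j) x := (EuclideanSpace.proj (𝕜 := ℝ) j).hasFDerivAt
    have hmul := (hf x).mul hproj
    have h : grad (f * MvPolynomial.X j) x
        = MvPolynomial.eval (fun i => x i) f • (EuclideanSpace.proj (𝕜 := ℝ) j)
          + (x j) • grad f x := by
      ext y
      simp only [grad, ContinuousLinearMap.add_apply, ContinuousLinearMap.smul_apply,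
        ContinuousLinearMap.sum_apply, smul_eq_mul, pderiv_mul, pderiv_X, MvPolynomial.eval_mul, MvPolynomial.eval_X,
        map_add, MvPolynomial.eval_add, Fin.sum_univ_two]
      fin_cases j <;>
        simp [PiLp.proj_apply, Fin.sum_univ_two, pderiv_X] <;> ring
    rw [h]
    have hfun : (fun y : EuclideanSpace ℝ (Fin 2) => MvPolynomial.eval (fun i => y i)
        (f * MvPolynomial.X j)) = fun y => (MvPolynomial.eval (fun i => y i) f) * y j := by
      funext y; simp [MvPolynomial.eval_mul]
    rw [hfun]
    exact hmul

lemma grad_apply (q : MvPolynomial (Fin 2) ℝ) (x v : EuclideanSpace ℝ (Fin 2)) :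
    grad q x v = ∑ i : Fin 2, v i * MvPolynomial.eval (fun j => x j) (pderiv i q) := by
  simp only [grad, ContinuousLinearMap.sum_apply, ContinuousLinearMap.smul_apply,
    PiLp.proj_apply, smul_eq_mul]
  exact Finset.sum_congr rfl fun i _ => mul_comm _ _

/-! ### The affine substitution -/

noncomputable def subAff (b v w : Fin 2 → ℝ) :
    MvPolynomial (Fin 2) ℝ →ₐ[ℝ] Polynomial (Polynomial ℝ) :=
  MvPolynomial.aeval (fun i => Polynomial.C (Polynomial.C (b i) + Polynomial.C (v i) * Polynomial.X)
    + Polynomial.C (Polynomial.C (w i)) * Polynomial.X)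

noncomputable def Dv (v : Fin 2 → ℝ) (q : MvPolynomial (Fin 2) ℝ) : MvPolynomial (Fin 2) ℝ :=
  ∑ i : Fin 2, v i • pderiv i q

lemma Dv_add (v : Fin 2 → ℝ) (f g : MvPolynomial (Fin 2) ℝ) :
    Dv v (f + g) = Dv v f + Dv v g := by
  simp [Dv, map_add, smul_add, Finset.sum_add_distrib]

lemma Dv_C (v : Fin 2 → ℝ) (r : ℝ) : Dv v (MvPolynomial.C r) = 0 := by
  simp [Dv, pderiv_C]

lemma Dv_mul_X (v : Fin 2 → ℝ) (f : MvPolynomial (Fin 2) ℝ) (j : Fin 2) :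
    Dv v (f * MvPolynomial.X j) = Dv v f * MvPolynomial.X j + MvPolynomial.C (v j) * f := by
  simp only [Dv, pderiv_mul, pderiv_X, smul_add, Finset.sum_add_distrib, Finset.smul_sum,
    MvPolynomial.smul_eq_C_mul, Fin.sum_univ_two, Fin.isValue]
  fin_cases j <;> simp <;> ring

lemma derivY_subAff (b v w : Fin 2 → ℝ) (q : MvPolynomial (Fin 2) ℝ) :
    Polynomial.derivative (subAff b v w q) = subAff b v w (Dv w q) := by
  induction q using MvPolynomial.induction_on with
  | C r => simp [subAff, Dv_C, MvPolynomial.aeval_C]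
  | add f g hf hg => simp [map_add, Dv_add, hf, hg]
  | mul_X f j hf =>
    rw [map_mul, derivative_mul, Dv_mul_X, map_add, map_mul, hf]
    simp [subAff, MvPolynomial.aeval_X, MvPolynomial.aeval_C]
    ring

lemma dX_subAff (b v w : Fin 2 → ℝ) (q : MvPolynomial (Fin 2) ℝ) :
    dX (subAff b v w q) = subAff b v w (Dv v q) := by
  induction q using MvPolynomial.induction_on with
  | C r =>
    simp only [subAff, MvPolynomial.aeval_C, Dv_C, map_zero]
    show dX (Polynomial.C (Polynomial.C r)) = 0
    rw [dX_C]
    simp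
  | add f g hf hg => simp [map_add, dX_add, Dv_add, hf, hg]
  | mul_X f j hf =>
    rw [map_mul, dX_mul, Dv_mul_X, map_add, map_mul, hf]
    have hXj : subAff b v w (MvPolynomial.X j)
        = Polynomial.C (Polynomial.C (b j) + Polynomial.C (v j) * Polynomial.X)
          + Polynomial.C (Polynomial.C (w j)) * Polynomial.X := by
      simp [subAff, MvPolynomial.aeval_X]
    rw [hXj, dX_add, dX_mul, dX_C, dX_C]
    have : dX (Polynomial.X : Polynomial (Polynomial ℝ)) = 0 := by
      ext k; simp [coeff_dX, Polynomial.coeff_X, apply_ite (fun x => derivative x)]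
    rw [this]
    have hmap : subAff b v w (MvPolynomial.C (v j)) = Polynomial.C (Polynomial.C (v j)) := by
      simp [subAff, MvPolynomial.aeval_C]
    rw [map_mul, hmap]
    simp [derivative_add, derivative_C_mul]
    ring

lemma ev_subAff (b v w : Fin 2 → ℝ) (q : MvPolynomial (Fin 2) ℝ) (s t : ℝ) :
    ev (subAff b v w q) s t = MvPolynomial.eval (fun i => b i + v i * s + w i * t) q := by
  induction q using MvPolynomial.induction_on with
  | C r => simp [subAff, MvPolynomial.aeval_C, ev]
  | add f g hf hg => simp [map_add, ev_add, hf, hg]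
  | mul_X f j hf =>
    rw [map_mul, ev_mul, hf]
    have : ev (subAff b v w (MvPolynomial.X j)) s t = b j + v j * s + w j * t := by
      simp [subAff, MvPolynomial.aeval_X, ev]
    rw [this, MvPolynomial.eval_mul, MvPolynomial.eval_X]

end PhiFEMAux

namespace PhiFEMAux
open Polynomial MvPolynomial

lemma pderiv_comm' (i j : Fin 2) (q : MvPolynomial (Fin 2) ℝ) :
    pderiv i (pderiv j q) = pderiv j (pderiv i q) := by
  induction q using MvPolynomial.induction_on with
  | C r => simp [pderiv_C]
  | add f g hf hg => simp [map_add, hf, hg]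
  | mul_X f k hf =>
    simp only [pderiv_mul, pderiv_X, map_add, hf, Pi.single_apply]
    split_ifs <;> simp <;> ring

lemma lap_decomp (u n : Fin 2 → ℝ) (L2 : ℝ)
    (h1 : u 0 ^ 2 + u 1 ^ 2 = L2) (h2 : n 0 ^ 2 + n 1 ^ 2 = 1)
    (h3 : u 0 * n 0 + u 1 * n 1 = 0) (q : MvPolynomial (Fin 2) ℝ) :
    Dv u (Dv u q) + L2 • Dv n (Dv n q)
      = L2 • (pderiv 0 (pderiv 0 q) + pderiv 1 (pderiv 1 q)) := by
  have h3' : u 0 * n 0 = -(u 1 * n 1) := by linarith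
  have h3sq : (u 0 * n 0) ^ 2 = (u 1 * n 1) ^ 2 := by rw [h3']; ring
  have k0 : L2 * n 0 ^ 2 = u 1 ^ 2 := by
    linear_combination (-(n 0 ^ 2)) * h1 + u 1 ^ 2 * h2 + h3sq
  have k1 : L2 * n 1 ^ 2 = u 0 ^ 2 := by
    linear_combination (-(n 1 ^ 2)) * h1 + u 0 ^ 2 * h2 - h3sq
  have k2 : L2 * (n 0 * n 1) = -(u 0 * u 1) := by
    linear_combination (-(n 0 * n 1)) * h1 + (-(u 0 * u 1)) * h2 + (u 0 * n 1 + u 1 * n 0) * h3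
  have K0 : (MvPolynomial.C L2 : MvPolynomial (Fin 2) ℝ) * MvPolynomial.C (n 0) ^ 2
      = MvPolynomial.C (u 1) ^ 2 := by
    rw [← map_pow, ← map_mul, k0, map_pow]
  have K1 : (MvPolynomial.C L2 : MvPolynomial (Fin 2) ℝ) * MvPolynomial.C (n 1) ^ 2
      = MvPolynomial.C (u 0) ^ 2 := by
    rw [← map_pow, ← map_mul, k1, map_pow]
  have K2 : (MvPolynomial.C L2 : MvPolynomial (Fin 2) ℝ)
        * (MvPolynomial.C (n 0) * MvPolynomial.C (n 1))
      = -(MvPolynomial.C (u 0) * MvPolynomial.C (u 1)) := by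
    rw [← map_mul, ← map_mul, k2, map_neg, map_mul]
  have CH1 : (MvPolynomial.C (u 0) : MvPolynomial (Fin 2) ℝ) ^ 2 + MvPolynomial.C (u 1) ^ 2
      = MvPolynomial.C L2 := by
    rw [← map_pow, ← map_pow, ← map_add, h1]
  have hcomm := pderiv_comm' 1 0 q
  simp only [Dv, Fin.sum_univ_two, map_add, map_smul, MvPolynomial.smul_eq_C_mul,
    pderiv_C_mul, map_add, mul_add, hcomm]
  linear_combination (pderiv 0 (pderiv 0 q)) * K0 + (pderiv 0 (pderiv 0 q)) * CH1
    + (pderiv 1 (pderiv 1 q)) * K1 + (pderiv 1 (pderiv 1 q)) * CH1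
    + (2 * pderiv 0 (pderiv 1 q)) * K2

/-- Solving a 2×2 linear system. -/
lemma solve2 (u n : Fin 2 → ℝ) (hdet : u 0 * n 1 - u 1 * n 0 ≠ 0) (v : Fin 2 → ℝ) :
    ∃ s t : ℝ, ∀ i, v i = s * u i + t * n i := by
  refine ⟨(v 0 * n 1 - v 1 * n 0) / (u 0 * n 1 - u 1 * n 0),
    (u 0 * v 1 - u 1 * v 0) / (u 0 * n 1 - u 1 * n 0), fun i => ?_⟩
  fin_cases i <;> simp only [Fin.zero_eta, Fin.mk_one] <;>
    rw [div_mul_eq_mul_div, div_mul_eq_mul_div, ← add_div, eq_div_iff hdet] <;> ring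

/-- The key recurrence argument: a bivariate polynomial which is constant to first
order along the line `Y = 0` and satisfies an (anisotropic) Laplace equation is constant. -/
lemma main_alg (Q : Polynomial (Polynomial ℝ)) (L2 : ℝ) (hL2 : L2 ≠ 0) (a : ℝ)
    (h0 : Q.coeff 0 = Polynomial.C a) (h1 : Q.coeff 1 = 0)
    (hH : dX (dX Q) + Polynomial.C (Polynomial.C L2) * derivative (derivative Q) = 0) :
    Q = Polynomial.C (Polynomial.C a) := by
  have hrec : ∀ m : ℕ, derivative (derivative (Q.coeff m))
      + Polynomial.C L2 * (Q.coeff (m + 2) * ((m + 1 : ℕ) + 1) * ((m : ℕ) + 1)) = 0 := by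
    intro m
    have := congrArg (fun R => Polynomial.coeff R m) hH
    simpa [coeff_dX, Polynomial.coeff_derivative, Polynomial.coeff_C_mul] using this
  have claim : ∀ k : ℕ, Q.coeff (k + 1) = 0 := by
    intro k
    induction k using Nat.strong_induction_on with
    | _ k ih =>
      match k with
      | 0 => exact h1
      | (m + 1) =>
        have hm := hrec m
        have hzero : derivative (derivative (Q.coeff m)) = 0 := by
          cases m with
          | zero => rw [h0]; simp
          | succ j => rw [ih j (by omega)]; simp
        rw [hzero, zero_add] at hm
        have hC : (Polynomial.C L2 : Polynomial ℝ) ≠ 0 := by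
          simpa using hL2
        have hcast1 : (((m + 1 : ℕ) : Polynomial ℝ) + 1) ≠ 0 := by
          exact_mod_cast Nat.cast_add_one_ne_zero (R := Polynomial ℝ) (m + 1)
        have hcast2 : (((m : ℕ) : Polynomial ℝ) + 1) ≠ 0 := by
          exact_mod_cast Nat.cast_add_one_ne_zero (R := Polynomial ℝ) m
        have := mul_eq_zero.mp hm
        rcases this with h | h
        · exact absurd h hC
        · rcases mul_eq_zero.mp h with h' | h'
          · rcases mul_eq_zero.mp h' with h'' | h''
            · exact h''
            · exact absurd h'' hcast1
          · exact absurd h' hcast2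
  refine Polynomial.ext fun k => ?_
  cases k with
  | zero => simpa using h0
  | succ k => simp [claim k, Polynomial.coeff_C]

end PhiFEMAux

open Polynomial in
open PhiFEMAux in
theorem phiFEM_poly_propagation
    (A B Cpt : EuclideanSpace ℝ (Fin 2))
    (hABC : AffineIndependent ℝ ![A, B, Cpt])
    (T : Set (EuclideanSpace ℝ (Fin 2)))
    (hT : T = convexHull ℝ {A, B, Cpt})
    (E : Set (EuclideanSpace ℝ (Fin 2)))
    (hE : E = segment ℝ A B)
    (n : EuclideanSpace ℝ (Fin 2)) (hn : ‖n‖ = 1) (hnE : ⟪n, B - A⟫ = 0)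
    (p : EuclideanSpace ℝ (Fin 2) → ℝ)
    (hp : ∃ q : MvPolynomial (Fin 2) ℝ, ∀ x, p x = MvPolynomial.eval (fun i => x i) q)
    (a : ℝ)
    (hval : ∀ x ∈ E, p x = a)
    (hnder : ∀ x ∈ E, fderiv ℝ p x n = 0)
    (hharm : ∀ x ∈ T,
      ∑ i : Fin 2, fderiv ℝ (fun y => fderiv ℝ p y (EuclideanSpace.single i 1)) x
        (EuclideanSpace.single i 1) = 0) :
    ∀ x ∈ T, p x = a := by
  subst hT hE
  obtain ⟨q, hq⟩ := hp
  have hpe : p = fun x => MvPolynomial.eval (fun i => x i) q := funext hq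
  -- coordinates
  set uc : Fin 2 → ℝ := fun i => B i - A i with huc
  set nc : Fin 2 → ℝ := fun i => n i with hnc
  set Ac : Fin 2 → ℝ := fun i => A i with hAc
  set L2 : ℝ := uc 0 ^ 2 + uc 1 ^ 2 with hL2def
  have hn2 : nc 0 ^ 2 + nc 1 ^ 2 = 1 := by
    have h := real_inner_self_eq_norm_sq n
    rw [hn] at h
    simp only [PiLp.inner_apply, RCLike.inner_apply, conj_trivial, Fin.sum_univ_two] at h
    simp only [hnc]
    nlinarith [h]
  have hun : uc 0 * nc 0 + uc 1 * nc 1 = 0 := by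
    have := hnE
    simp only [PiLp.inner_apply, RCLike.inner_apply, conj_trivial, Fin.sum_univ_two,
      PiLp.sub_apply] at this
    simp only [huc, hnc]
    linarith [this]
  have hAB : A ≠ B := by
    intro h
    have h01 : (0 : Fin 3) = 1 := hABC.injective (by simp [h])
    simp at h01
  have hL2pos : 0 < L2 := by
    rcases lt_trichotomy L2 0 with h | h | h
    · nlinarith [sq_nonneg (uc 0), sq_nonneg (uc 1)]
    · exfalso
      have h0 : uc 0 = 0 ∧ uc 1 = 0 := by
        constructor <;> nlinarith [sq_nonneg (uc 0), sq_nonneg (uc 1)]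
      apply hAB
      refine PiLp.ext fun i => ?_
      have h00 := h0.1
      have h01 := h0.2
      simp only [huc] at h00 h01
      fin_cases i
      · show A 0 = B 0; linarith
      · show A 1 = B 1; linarith
    · exact h
  have hdetsq : (uc 0 * nc 1 - uc 1 * nc 0) ^ 2 = L2 := by
    linear_combination (nc 0 ^ 2 + nc 1 ^ 2) * hL2def.symm + L2 * hn2
      - (uc 0 * nc 0 + uc 1 * nc 1) * hun
  have hdet : uc 0 * nc 1 - uc 1 * nc 0 ≠ 0 := by
    intro h
    rw [h] at hdetsq
    simp at hdetsq
    exact absurd hdetsq.symm (ne_of_gt hL2pos)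
  -- the bivariate polynomial
  set Qσ : Polynomial (Polynomial ℝ) := subAff Ac uc nc q with hQσ
  have hcoord : ∀ (s t : ℝ) (i : Fin 2), (A + s • (B - A) + t • n) i = Ac i + uc i * s + nc i * t := by
    intro s t i
    simp only [PiLp.add_apply, PiLp.smul_apply, PiLp.sub_apply, smul_eq_mul, huc, hnc, hAc]
    ring
  have F1 : ∀ s t : ℝ, ev Qσ s t = p (A + s • (B - A) + t • n) := by
    intro s t
    rw [hQσ, ev_subAff, hpe]
    have : (fun i => Ac i + uc i * s + nc i * t) = (fun i => (A + s • (B - A) + t • n) i) :=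
      funext fun i => (hcoord s t i).symm
    rw [this]
  have hmemseg : ∀ s ∈ Set.Icc (0:ℝ) 1, A + s • (B - A) + (0:ℝ) • n ∈ segment ℝ A B := by
    intro s hs
    rw [segment_eq_image']
    exact ⟨s, hs, by simp⟩
  have F2 : ∀ s ∈ Set.Icc (0:ℝ) 1, ev Qσ s 0 = a := by
    intro s hs
    rw [F1]
    exact hval _ (hmemseg s hs)
  -- the derivative bridge
  have hfd : ∀ y, fderiv ℝ p y = grad q y := by
    intro y
    rw [hpe]
    exact (hasFDerivAt_eval q y).fderiv
  have F3 : ∀ s ∈ Set.Icc (0:ℝ) 1, ev (derivative Qσ) s 0 = 0 := by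
    intro s hs
    have hA1 := hasDerivAt_ev_t Qσ s 0
    have hcurve : HasDerivAt (fun t : ℝ => A + s • (B - A) + t • n) n 0 := by
      simpa using ((hasDerivAt_id (0:ℝ)).smul_const n).const_add (A + s • (B - A))
    have hcomp := (hasFDerivAt_eval q (A + s • (B - A) + (0:ℝ) • n)).comp_hasDerivAt 0 hcurve
    have hfun : (fun t : ℝ => MvPolynomial.eval (fun i => (A + s • (B - A) + t • n) i) q)
        = fun t : ℝ => ev Qσ s t := by
      funext t
      rw [F1, hpe]
    simp only [Function.comp_def] at hcomp
    rw [hfun] at hcomp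
    have := hA1.unique hcomp
    rw [this]
    have hgr : grad q (A + s • (B - A) + (0:ℝ) • n) n = fderiv ℝ p (A + s • (B - A) + (0:ℝ) • n) n := by
      rw [hfd]
    rw [hgr]
    rw [hnder _ (hmemseg s hs)]
  -- harmonicity as polynomial statement on T
  set Lapq : MvPolynomial (Fin 2) ℝ :=
    MvPolynomial.pderiv 0 (MvPolynomial.pderiv 0 q) + MvPolynomial.pderiv 1 (MvPolynomial.pderiv 1 q)
    with hLapq
  have F4 : ∀ x ∈ convexHull ℝ ({A, B, Cpt} : Set (EuclideanSpace ℝ (Fin 2))),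
      MvPolynomial.eval (fun i => x i) Lapq = 0 := by
    intro x hx
    have h := hharm x hx
    have hterm : ∀ i : Fin 2,
        fderiv ℝ (fun y => fderiv ℝ p y (EuclideanSpace.single i 1)) x (EuclideanSpace.single i 1)
          = MvPolynomial.eval (fun j => x j) (MvPolynomial.pderiv i (MvPolynomial.pderiv i q)) := by
      intro i
      have hsingle : ∀ (r : MvPolynomial (Fin 2) ℝ) (y : EuclideanSpace ℝ (Fin 2)),
          grad r y (EuclideanSpace.single i 1) = MvPolynomial.eval (fun j => y j)
            (MvPolynomial.pderiv i r) := by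
        intro r y
        rw [grad_apply]
        simp only [Fin.sum_univ_two]
        fin_cases i <;> simp [EuclideanSpace.single_apply]
      have hfun2 : (fun y => fderiv ℝ p y (EuclideanSpace.single i 1))
          = fun y => MvPolynomial.eval (fun j => y j) (MvPolynomial.pderiv i q) := by
        funext y
        rw [hfd, hsingle]
      rw [hfun2, (hasFDerivAt_eval (MvPolynomial.pderiv i q) x).fderiv, hsingle]
    simp only [Fin.sum_univ_two] at h
    rw [hterm 0, hterm 1] at h
    simp only [hLapq, map_add]
    exact h
  -- decomposition of Cpt - A
  obtain ⟨c1, c2, hc⟩ := solve2 uc nc hdet (fun i => Cpt i - A i)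
  have hc2 : c2 ≠ 0 := by
    intro h
    rw [h] at hc
    have hcol : Collinear ℝ ({A, B, Cpt} : Set (EuclideanSpace ℝ (Fin 2))) := by
      rw [collinear_iff_of_mem (Set.mem_insert A _)]
      refine ⟨B - A, ?_⟩
      intro pt hpt
      rcases hpt with rfl | rfl | rfl
      · exact ⟨0, by simp⟩
      · exact ⟨1, by simp⟩
      · refine ⟨c1, ?_⟩
        have : pt = c1 • (B - A) + A := by
          refine PiLp.ext fun i => ?_
          have := hc i
          simp only [zero_mul, mul_zero, add_zero] at this
          simp only [PiLp.add_apply, PiLp.smul_apply, PiLp.sub_apply, smul_eq_mul]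
          simp only [huc] at this
          linarith
        simpa using this
    exact (affineIndependent_iff_not_collinear_set.mp hABC) hcol
  -- the box inside T
  have hbox : ∀ lam mu : ℝ, lam ∈ Set.Icc (0:ℝ) (1/2) → mu ∈ Set.Icc (0:ℝ) (1/2) →
      A + (lam + mu * c1) • (B - A) + (mu * c2) • n
        ∈ convexHull ℝ ({A, B, Cpt} : Set (EuclideanSpace ℝ (Fin 2))) := by
    intro lam mu hlam hmu
    have hpt : A + (lam + mu * c1) • (B - A) + (mu * c2) • n
        = ∑ i : Fin 3, (![1 - lam - mu, lam, mu] i) • (![A, B, Cpt] i) := by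
      rw [Fin.sum_univ_three]
      refine PiLp.ext fun i => ?_
      have hci := hc i
      simp only [PiLp.add_apply, PiLp.smul_apply, PiLp.sub_apply, smul_eq_mul,
        Matrix.cons_val_zero, Matrix.cons_val_one, Matrix.head_cons, Matrix.cons_val_two,
        Matrix.tail_cons]
      simp only [huc, hnc] at hci ⊢
      linear_combination (-mu) * hci
    rw [hpt]
    refine (convex_convexHull ℝ _).sum_mem ?_ ?_ ?_
    · intro i _
      fin_cases i <;> simp <;> [linarith [hlam.2, hmu.2]; linarith [hlam.1]; linarith [hmu.1]]
    · rw [Fin.sum_univ_three]; simp; ring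
    · intro i _
      apply subset_convexHull
      fin_cases i <;> simp
  -- σ(Lapq) = 0
  have F5 : subAff Ac uc nc Lapq = 0 := by
    apply eq_zero_of_ev_zero _ ((fun mu => mu * c2) '' Set.Icc (0:ℝ) (1/2))
    · exact Set.Infinite.image (fun x _ y _ h => mul_right_cancel₀ hc2 h)
        (Set.Icc_infinite (by norm_num))
    · rintro t ⟨mu, hmu, rfl⟩
      refine ⟨(fun lam => lam + mu * c1) '' Set.Icc (0:ℝ) (1/2),
        Set.Infinite.image (fun x _ y _ h => by linarith [h]) (Set.Icc_infinite (by norm_num)), ?_⟩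
      rintro s ⟨lam, hlam, rfl⟩
      rw [ev_subAff]
      have : (fun i => Ac i + uc i * (lam + mu * c1) + nc i * (mu * c2))
          = fun i => (A + (lam + mu * c1) • (B - A) + (mu * c2) • n) i := by
        funext i
        rw [hcoord]
      rw [this]
      exact F4 _ (hbox lam mu hlam hmu)
  -- the anisotropic Laplace equation for Qσ
  have F6 : dX (dX Qσ) + Polynomial.C (Polynomial.C L2) * derivative (derivative Qσ) = 0 := by
    rw [hQσ, dX_subAff, dX_subAff, derivY_subAff, derivY_subAff]
    have hsmul : ∀ R : Polynomial (Polynomial ℝ), Polynomial.C (Polynomial.C L2) * R = L2 • R := by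
      intro R
      rw [Algebra.smul_def]
      congr 1
    rw [hsmul, ← map_smul, ← map_add, lap_decomp uc nc L2 hL2def.symm hn2 hun, ← hLapq, map_smul, F5]
    simp
  -- coefficient facts
  have h0 : Qσ.coeff 0 = Polynomial.C a := by
    have hz : ∀ s ∈ Set.Icc (0:ℝ) 1, (Qσ.coeff 0 - Polynomial.C a).eval s = 0 := by
      intro s hs
      have : (Qσ.coeff 0).eval s = a := by
        have h := F2 s hs
        rw [ev] at h
        rw [coeff_zero_eq_eval_zero]
        rw [show (0 : Polynomial ℝ) = Polynomial.C 0 by simp]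
        exact h
      simp [this]
    have := Polynomial.eq_zero_of_infinite_isRoot (Qσ.coeff 0 - Polynomial.C a)
      ((Set.Icc_infinite (by norm_num : (0:ℝ) < 1)).mono (fun s hs => hz s hs))
    have := sub_eq_zero.mp this
    exact this
  have h1 : Qσ.coeff 1 = 0 := by
    have hz : ∀ s ∈ Set.Icc (0:ℝ) 1, (Qσ.coeff 1).eval s = 0 := by
      intro s hs
      have h := F3 s hs
      rw [ev] at h
      have hc1 : (derivative Qσ).coeff 0 = Qσ.coeff 1 := by
        rw [Polynomial.coeff_derivative]
        simp
      rw [← hc1, coeff_zero_eq_eval_zero]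
      rw [show (0 : Polynomial ℝ) = Polynomial.C 0 by simp]
      exact h
    exact Polynomial.eq_zero_of_infinite_isRoot _
      ((Set.Icc_infinite (by norm_num : (0:ℝ) < 1)).mono (fun s hs => hz s hs))
  -- conclude Qσ is constant
  have hQconst : Qσ = Polynomial.C (Polynomial.C a) :=
    main_alg Qσ L2 (ne_of_gt hL2pos) a h0 h1 F6
  have hall : ∀ s t : ℝ, p (A + s • (B - A) + t • n) = a := by
    intro s t
    rw [← F1, hQconst]
    simp [ev]
  -- finish
  intro x _
  obtain ⟨s, t, hst⟩ := solve2 uc nc hdet (fun i => x i - A i)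
  have hx : x = A + s • (B - A) + t • n := by
    ext i
    have := hst i
    simp only [huc, hnc] at this
    simp only [PiLp.add_apply, PiLp.smul_apply, PiLp.sub_apply, smul_eq_mul]
    linarith
  rw [hx]
  exact hall s t
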